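/- Let β, t ∈ ℝ with β > 0 and t > 0, and let 0 < γ < β. Then (1/(2πi Γ(β))) ∫_{Re(z) = -γ} Γ(-z) Γ(β + z) t^z dz = (1 + t)^{-β}, where the contour integral is over the vertical line Re(z) = -γ and converges absolutely. -/

import Mathlib

open MeasureTheory Complex Set

-- change of variables basics
lemma mb_deriv : ∀ y ∈ Ioo (0:ℝ) 1, HasDerivWithinAt (fun y : ℝ => y / (1 - y))
    ((1 - y)⁻¹ ^ 2) (Ioo (0:ℝ) 1) y := by
  intro y hy
  have h1 : (1 : ℝ) - y ≠ 0 := by simp only [mem_Ioo] at hy; intro h; linarith [hy.2]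
  have := (hasDerivAt_id y).div ((hasDerivAt_const y (1:ℝ)).sub (hasDerivAt_id y)) h1
  refine this.hasDerivWithinAt.congr_deriv ?_
  simp only [Pi.sub_apply, id]
  field_simp
  ring

lemma mb_inj : InjOn (fun y : ℝ => y / (1 - y)) (Ioo (0:ℝ) 1) := by
  intro y1 h1 y2 h2 heq
  simp only [mem_Ioo] at h1 h2
  have e1 : (1:ℝ) - y1 ≠ 0 := by intro h; linarith [h1.2]
  have e2 : (1:ℝ) - y2 ≠ 0 := by intro h; linarith [h2.2]
  field_simp at heq
  nlinarith [heq]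

lemma mb_image : (fun y : ℝ => y / (1 - y)) '' (Ioo (0:ℝ) 1) = Ioi (0:ℝ) := by
  ext x
  constructor
  · rintro ⟨y, hy, rfl⟩
    simp only [mem_Ioo] at hy
    exact div_pos hy.1 (by linarith [hy.2])
  · intro hx
    refine ⟨x / (1 + x), ?_, ?_⟩
    · constructor
      · exact div_pos (mem_Ioi.mp hx) (by linarith [mem_Ioi.mp hx])
      · rw [div_lt_one (by linarith [mem_Ioi.mp hx])]; linarith [mem_Ioi.mp hx]
    · have h1 : (1:ℝ) + x ≠ 0 := by have := mem_Ioi.mp hx; positivity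
      field_simp
      ring

lemma mb_pointwise (β : ℝ) (s : ℂ) {y : ℝ} (hy : y ∈ Ioo (0:ℝ) 1) :
    |(1 - y)⁻¹ ^ 2| • ( ((y / (1 - y) : ℝ) : ℂ) ^ (s - 1) *
      ((1 + y / (1 - y) : ℝ) : ℂ) ^ (-(β : ℂ)) )
    = (y : ℂ) ^ (s - 1) * ((1 : ℂ) - (y : ℂ)) ^ ((β : ℂ) - s - 1) := by
  simp only [mem_Ioo] at hy
  have hu0 : (0:ℝ) < 1 - y := by linarith [hy.2]
  have hune : (1:ℝ) - y ≠ 0 := ne_of_gt hu0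
  have hcne : ((1 - y : ℝ) : ℂ) ≠ 0 := by exact_mod_cast hune
  have harg : ((1 - y : ℝ) : ℂ).arg ≠ Real.pi := by
    rw [Complex.arg_ofReal_of_nonneg hu0.le]; exact Real.pi_ne_zero.symm
  -- rewrite 1 + y/(1-y) = (1-y)⁻¹
  have h1 : (1 + y / (1 - y) : ℝ) = (1 - y)⁻¹ := by field_simp; ring
  -- rewrite y/(1-y) = y * (1-y)⁻¹
  have h2 : (y / (1 - y) : ℝ) = y * (1 - y)⁻¹ := by ring
  rw [h1, h2, Complex.ofReal_mul, Complex.mul_cpow_ofReal_nonneg hy.1.le (by positivity),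
    Complex.ofReal_inv, Complex.inv_cpow _ _ harg, Complex.inv_cpow _ _ harg]
  have habs : |(1 - y)⁻¹ ^ 2| = (1 - y)⁻¹ ^ 2 := abs_of_pos (by positivity)
  rw [habs]
  have hsmul : ((1 - y)⁻¹ ^ 2 : ℝ) • ((y : ℂ) ^ (s - 1) * (((1 - y : ℝ) : ℂ) ^ (s - 1))⁻¹ *
      ((((1 - y : ℝ) : ℂ)) ^ (-(β:ℂ)))⁻¹)
      = (((1 - y : ℝ):ℂ)⁻¹ ^ 2) * ((y : ℂ) ^ (s - 1) * (((1 - y : ℝ) : ℂ) ^ (s - 1))⁻¹ *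
      ((((1 - y : ℝ) : ℂ)) ^ (-(β:ℂ)))⁻¹) := by
    rw [Complex.real_smul]
    push_cast
    ring
  rw [hsmul]
  -- now pure cpow algebra with base u := ((1-y:ℝ):ℂ)
  have hb : ((1:ℂ) - (y:ℂ)) = ((1 - y : ℝ) : ℂ) := by push_cast; ring
  rw [hb]
  set u : ℂ := ((1 - y : ℝ) : ℂ) with hu
  have key : u ^ ((β:ℂ) - s - 1) = u⁻¹ ^ 2 * ((u ^ (s-1))⁻¹ * (u ^ (-(β:ℂ)))⁻¹) := by
    rw [← Complex.cpow_neg, ← Complex.cpow_neg, neg_neg]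
    have : u⁻¹ ^ 2 = u ^ ((-2 : ℤ) : ℂ) := by
      rw [Complex.cpow_intCast]
      simp [zpow_neg, inv_pow, zpow_ofNat]
    rw [this, ← Complex.cpow_add _ _ hcne, ← Complex.cpow_add _ _ hcne]
    norm_num
    ring_nf
  rw [key]
  ring

lemma mb_mellin (β : ℝ) (s : ℂ) (hs1 : 0 < s.re) (hs2 : s.re < β) :
    MellinConvergent (fun x : ℝ => ((1 + x : ℝ) : ℂ) ^ (-(β:ℂ))) s ∧
    mellin (fun x : ℝ => ((1 + x : ℝ) : ℂ) ^ (-(β:ℂ))) s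
      = Complex.Gamma s * Complex.Gamma ((β:ℂ) - s) / Complex.Gamma (β:ℂ) := by
  have hv : 0 < ((β:ℂ) - s).re := by simp [Complex.sub_re]; linarith
  have hbc := Complex.betaIntegral_convergent hs1 hv
  have hIoo : IntegrableOn (fun x : ℝ => (x:ℂ) ^ (s-1) * (1 - (x:ℂ)) ^ ((β:ℂ) - s - 1))
      (Ioo (0:ℝ) 1) := by
    have := hbc.1
    exact this.mono_set Ioo_subset_Ioc_self
  have hconv : MellinConvergent (fun x : ℝ => ((1 + x : ℝ) : ℂ) ^ (-(β:ℂ))) s := by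
    rw [MellinConvergent, ← mb_image,
      integrableOn_image_iff_integrableOn_abs_deriv_smul measurableSet_Ioo mb_deriv mb_inj]
    refine (hIoo.congr_fun ?_ measurableSet_Ioo)
    intro y hy
    simpa [smul_eq_mul] using (mb_pointwise β s hy).symm
  refine ⟨hconv, ?_⟩
  have h1 : mellin (fun x : ℝ => ((1 + x : ℝ) : ℂ) ^ (-(β:ℂ))) s
      = Complex.betaIntegral s ((β:ℂ) - s) := by
    rw [mellin, ← mb_image,
      integral_image_eq_integral_abs_deriv_smul measurableSet_Ioo mb_deriv mb_inj]
    rw [Complex.betaIntegral, intervalIntegral.integral_of_le zero_le_one,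
      integral_Ioc_eq_integral_Ioo]
    refine setIntegral_congr_fun measurableSet_Ioo fun y hy => ?_
    have := mb_pointwise β s hy
    simpa [smul_eq_mul] using this
  have h2 := Complex.Gamma_mul_Gamma_eq_betaIntegral hs1 hv
  have h3 : s + ((β:ℂ) - s) = (β:ℂ) := by ring
  rw [h3] at h2
  have h4 : Complex.Gamma (β:ℂ) ≠ 0 :=
    Complex.Gamma_ne_zero_of_re_pos (by simpa using hs1.trans hs2)
  rw [h1]
  field_simp [h2]
  rw [h2]; ring

lemma mb_bound (β γ : ℝ) (hγ0 : 0 < γ) (hγβ : γ < β) (s : ℂ) (hre : s.re = γ) :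
    ‖Complex.Gamma s * Complex.Gamma ((β:ℂ) - s)‖ ≤
      (‖Complex.Gamma ((β:ℂ) + 2)‖ *
        (∫ x in Ioo (0:ℝ) 1, x ^ (γ+1) * (1-x) ^ (β-γ-1))) / (γ^2 + s.im^2) := by
  have hs0 : s ≠ 0 := by
    intro h; rw [h] at hre; simp at hre; linarith
  have hs1 : s + 1 ≠ 0 := by
    intro h
    have : (s + 1).re = 0 := by rw [h]; simp
    simp [Complex.add_re, hre] at this; linarith
  have hre2 : (s + 2).re = γ + 2 := by simp [Complex.add_re, hre]
  have hvre : ((β:ℂ) - s).re = β - γ := by simp [Complex.sub_re, hre]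
  have hG2 : Complex.Gamma (s + 2) = (s + 1) * (s * Complex.Gamma s) := by
    have e2 : s + 2 = (s + 1) + 1 := by ring
    rw [e2, Complex.Gamma_add_one _ hs1, Complex.Gamma_add_one _ hs0]
  have hBeta : Complex.Gamma (s + 2) * Complex.Gamma ((β:ℂ) - s)
      = Complex.Gamma ((β:ℂ) + 2) * Complex.betaIntegral (s + 2) ((β:ℂ) - s) := by
    have := Complex.Gamma_mul_Gamma_eq_betaIntegral
      (show 0 < (s + 2).re by rw [hre2]; linarith)
      (show 0 < ((β:ℂ) - s).re by rw [hvre]; linarith)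
    rwa [show s + 2 + ((β:ℂ) - s) = (β:ℂ) + 2 by ring] at this
  -- bound the beta integral
  have hBnorm : ‖Complex.betaIntegral (s + 2) ((β:ℂ) - s)‖ ≤
      ∫ x in Ioo (0:ℝ) 1, x ^ (γ+1) * (1-x) ^ (β-γ-1) := by
    rw [Complex.betaIntegral, intervalIntegral.integral_of_le zero_le_one,
      integral_Ioc_eq_integral_Ioo]
    refine (norm_integral_le_integral_norm _).trans ?_
    refine le_of_eq (setIntegral_congr_fun measurableSet_Ioo fun x hx => ?_)
    simp only [mem_Ioo] at hx
    have hx1 : (0:ℝ) < 1 - x := by linarith [hx.2]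
    have hc : (1 : ℂ) - (x:ℂ) = ((1 - x : ℝ) : ℂ) := by push_cast; ring
    rw [norm_mul, hc,
      Complex.norm_cpow_eq_rpow_re_of_pos hx.1, Complex.norm_cpow_eq_rpow_re_of_pos hx1]
    rw [show (s + 2 - 1).re = γ + 1 by simp [Complex.add_re, Complex.sub_re, hre]; ring,
        show ((β:ℂ) - s - 1).re = β - γ - 1 by simp [Complex.sub_re, hre]]
  -- denominator bound
  have habs2 : ‖s‖^2 = γ^2 + s.im^2 := by
    rw [Complex.sq_norm, Complex.normSq_apply, hre]; ring
  have hden : γ^2 + s.im^2 ≤ ‖s + 1‖ * ‖s‖ := by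
    have h1 : ‖s+1‖^2 = (γ+1)^2 + s.im^2 := by
      rw [Complex.sq_norm, Complex.normSq_apply]; simp [Complex.add_re, Complex.add_im, hre]; ring
    have h2 : ‖s‖ ≤ ‖s+1‖ := by
      nlinarith [norm_nonneg s, norm_nonneg (s+1)]
    calc γ^2 + s.im^2 = ‖s‖^2 := habs2.symm
      _ ≤ ‖s+1‖ * ‖s‖ := by
          nlinarith [norm_nonneg s]
      _ = ‖s + 1‖ * ‖s‖ := rfl
  -- express Gamma s * Gamma (β - s)
  have key : Complex.Gamma s * Complex.Gamma ((β:ℂ) - s)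
      = Complex.Gamma ((β:ℂ) + 2) * Complex.betaIntegral (s + 2) ((β:ℂ) - s) / ((s+1) * s) := by
    rw [← hBeta, hG2]
    field_simp
  rw [key, norm_div, norm_mul, norm_mul]
  have hpos : (0:ℝ) < γ^2 + s.im^2 := by positivity
  have hInt : 0 ≤ ∫ x in Ioo (0:ℝ) 1, x ^ (γ+1) * (1-x) ^ (β-γ-1) := by
    refine setIntegral_nonneg measurableSet_Ioo fun x hx => ?_
    simp only [mem_Ioo] at hx
    exact mul_nonneg (Real.rpow_nonneg hx.1.le _) (Real.rpow_nonneg (by linarith [hx.2]) _)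
  refine div_le_div₀ (mul_nonneg (norm_nonneg _) hInt) ?_ hpos hden
  exact mul_le_mul_of_nonneg_left hBnorm (norm_nonneg _)

lemma mb_integrable_aux (γ : ℝ) (hγ0 : 0 < γ) (C : ℝ) :
    Integrable (fun v : ℝ => C / (γ^2 + v^2)) := by
  have h : Integrable (fun v : ℝ => (1 + (v/γ)^2)⁻¹) :=
    integrable_inv_one_add_sq.comp_div (ne_of_gt hγ0)
  have heq : (fun v : ℝ => C / (γ^2 + v^2)) = fun v => (C / γ^2) * (1 + (v/γ)^2)⁻¹ := by
    funext v
    have hne : γ^2 + v^2 ≠ 0 := by positivity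
    field_simp
  rw [heq]
  exact h.const_mul _

lemma mb_contGamma (c w : ℂ) (h : 0 < c.re) (hw : w.re = 0) :
    Continuous fun v : ℝ => Complex.Gamma (c + w * v) := by
  rw [continuous_iff_continuousAt]
  intro v
  have hre : (c + w * v).re = c.re := by
    simp [Complex.add_re, Complex.mul_re, hw, Complex.ofReal_im]
  refine ContinuousAt.comp ?_ (by fun_prop)
  refine (Complex.differentiableAt_Gamma _ fun m => ?_).continuousAt
  intro heq
  have := hre
  rw [heq] at this
  simp only [Complex.neg_re, Complex.natCast_re] at this
  have hcast := Nat.cast_nonneg (α := ℝ) m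
  linarith

lemma mb_int_neg (f : ℝ → ℂ) : ∫ y : ℝ, f (-y) = ∫ y : ℝ, f y := by
  have A : MeasurableEmbedding fun x : ℝ => -x :=
    (Homeomorph.neg ℝ).isClosedEmbedding.measurableEmbedding
  have h := A.integral_map (μ := volume) f
  rw [Measure.map_neg_eq_self (volume : Measure ℝ)] at h
  exact h.symm

/-- Mellin–Barnes integral: for `0 < γ < β` and `t > 0`,
`(1/(2πi)) ∫_{Re z = -γ} Γ(-z) Γ(β+z) t^z dz = Γ(β) (1+t)^{-β}`.
Parametrizing the vertical line by `z = -γ + iv` turns `(1/(2πi)) dz` into `(1/(2π)) dv`. -/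
theorem stmt8 (β t γ : ℝ) (hβ : 0 < β) (ht : 0 < t) (hγ0 : 0 < γ) (hγβ : γ < β) :
    MeasureTheory.Integrable (fun v : ℝ =>
      Complex.Gamma (-(-(γ : ℂ) + Complex.I * v)) * Complex.Gamma ((β : ℂ) + (-(γ : ℂ) + Complex.I * v)) *
        (t : ℂ) ^ (-(γ : ℂ) + Complex.I * v)) ∧
    (1 / (2 * (Real.pi : ℂ) * Complex.Gamma (β : ℂ))) *
      ∫ v : ℝ, Complex.Gamma (-(-(γ : ℂ) + Complex.I * v)) * Complex.Gamma ((β : ℂ) + (-(γ : ℂ) + Complex.I * v)) *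
        (t : ℂ) ^ (-(γ : ℂ) + Complex.I * v)
      = ((1 + t : ℝ) : ℂ) ^ (-(β : ℂ)) := by
  set f : ℝ → ℂ := fun x => ((1 + x : ℝ) : ℂ) ^ (-(β:ℂ)) with hfdef
  set G : ℝ → ℂ := fun v => Complex.Gamma (-(-(γ : ℂ) + Complex.I * v)) *
      Complex.Gamma ((β : ℂ) + (-(γ : ℂ) + Complex.I * v)) *
      (t : ℂ) ^ (-(γ : ℂ) + Complex.I * v) with hGdef
  set C : ℝ := ‖Complex.Gamma ((β:ℂ) + 2)‖ *
      (∫ x in Ioo (0:ℝ) 1, x ^ (γ+1) * (1-x) ^ (β-γ-1)) with hCdef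
  have ht0 : (t:ℂ) ≠ 0 := by exact_mod_cast ne_of_gt ht
  have hΓβ : Complex.Gamma (β:ℂ) ≠ 0 := Complex.Gamma_ne_zero_of_re_pos (by simpa using hβ)
  -- continuity of G
  have hcont1 : Continuous fun v : ℝ => Complex.Gamma (-(-(γ : ℂ) + Complex.I * v)) := by
    have h := mb_contGamma (γ:ℂ) (-Complex.I) (by simpa using hγ0) (by simp)
    refine h.congr fun v => ?_
    congr 1; ring
  have hcont2 : Continuous fun v : ℝ => Complex.Gamma ((β : ℂ) + (-(γ : ℂ) + Complex.I * v)) := by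
    have h := mb_contGamma ((β:ℂ) - (γ:ℂ)) Complex.I
      (by simp [Complex.sub_re]; linarith) (by simp)
    refine h.congr fun v => ?_
    congr 1; ring
  have hcont3 : Continuous fun v : ℝ => (t:ℂ) ^ (-(γ : ℂ) + Complex.I * v) := by
    simp_rw [Complex.cpow_def_of_ne_zero ht0]
    fun_prop
  have hcontG : Continuous G := (hcont1.mul hcont2).mul hcont3
  -- bound for G
  have hboundG : ∀ v : ℝ, ‖G v‖ ≤ (C * t ^ (-γ)) / (γ^2 + v^2) := by
    intro v
    have hs : -(-(γ : ℂ) + Complex.I * v) = (γ:ℂ) - Complex.I * v := by ring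
    have hbs : (β : ℂ) + (-(γ : ℂ) + Complex.I * v) = (β:ℂ) - ((γ:ℂ) - Complex.I * v) := by ring
    have hre : ((γ:ℂ) - Complex.I * v).re = γ := by simp
    have him : ((γ:ℂ) - Complex.I * v).im = -v := by simp
    have hb := mb_bound β γ hγ0 hγβ ((γ:ℂ) - Complex.I * v) hre
    rw [him] at hb
    have htnorm : ‖(t:ℂ) ^ (-(γ : ℂ) + Complex.I * v)‖ = t ^ (-γ) := by
      rw [Complex.norm_cpow_eq_rpow_re_of_pos ht]
      congr 1
      simp
    calc ‖G v‖ = ‖Complex.Gamma ((γ:ℂ) - Complex.I * v) *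
          Complex.Gamma ((β:ℂ) - ((γ:ℂ) - Complex.I * v))‖ * ‖(t:ℂ) ^ (-(γ : ℂ) + Complex.I * v)‖ := by
          rw [hGdef]; simp only [hs, hbs]; rw [norm_mul]
      _ ≤ (C / (γ^2 + (-v)^2)) * t ^ (-γ) := by
          rw [htnorm]
          exact mul_le_mul_of_nonneg_right hb (Real.rpow_nonneg ht.le _)
      _ = (C * t ^ (-γ)) / (γ^2 + v^2) := by ring
  have hIntG : Integrable G :=
    (mb_integrable_aux γ hγ0 (C * t ^ (-γ))).mono' hcontG.aestronglyMeasurable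
      (ae_of_all _ hboundG)
  refine ⟨hIntG, ?_⟩
  -- Mellin inversion
  have hres : ∀ y : ℝ, (((γ:ℝ):ℂ) + (y:ℂ) * Complex.I).re = γ := by
    intro y; simp
  have hmc : MellinConvergent f (γ:ℂ) :=
    (mb_mellin β (γ:ℂ) (by simpa using hγ0) (by simpa using hγβ)).1
  have hmel : ∀ y : ℝ, mellin f (((γ:ℝ):ℂ) + (y:ℂ) * Complex.I)
      = Complex.Gamma (((γ:ℝ):ℂ) + (y:ℂ) * Complex.I) *
        Complex.Gamma ((β:ℂ) - (((γ:ℝ):ℂ) + (y:ℂ) * Complex.I)) / Complex.Gamma (β:ℂ) := by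
    intro y
    exact (mb_mellin β _ (by rw [hres]; exact hγ0) (by rw [hres]; exact hγβ)).2
  have hvert : Complex.VerticalIntegrable (mellin f) γ := by
    have hcv1 : Continuous fun y : ℝ => Complex.Gamma (((γ:ℝ):ℂ) + (y:ℂ) * Complex.I) := by
      have h := mb_contGamma (γ:ℂ) Complex.I (by simpa using hγ0) (by simp)
      refine h.congr fun v => ?_
      congr 1; ring
    have hcv2 : Continuous fun y : ℝ =>
        Complex.Gamma ((β:ℂ) - (((γ:ℝ):ℂ) + (y:ℂ) * Complex.I)) := by
      have h := mb_contGamma ((β:ℂ) - (γ:ℂ)) (-Complex.I)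
        (by simp [Complex.sub_re]; linarith) (by simp)
      refine h.congr fun v => ?_
      congr 1; ring
    have hbv : ∀ y : ℝ, ‖Complex.Gamma (((γ:ℝ):ℂ) + (y:ℂ) * Complex.I) *
        Complex.Gamma ((β:ℂ) - (((γ:ℝ):ℂ) + (y:ℂ) * Complex.I)) / Complex.Gamma (β:ℂ)‖
        ≤ (C / ‖Complex.Gamma (β:ℂ)‖) / (γ^2 + y^2) := by
      intro y
      have hb := mb_bound β γ hγ0 hγβ (((γ:ℝ):ℂ) + (y:ℂ) * Complex.I) (hres y)
      have him : (((γ:ℝ):ℂ) + (y:ℂ) * Complex.I).im = y := by simp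
      rw [him] at hb
      rw [norm_div]
      calc ‖Complex.Gamma (((γ:ℝ):ℂ) + (y:ℂ) * Complex.I) *
            Complex.Gamma ((β:ℂ) - (((γ:ℝ):ℂ) + (y:ℂ) * Complex.I))‖ / ‖Complex.Gamma (β:ℂ)‖
          ≤ (C / (γ^2 + y^2)) / ‖Complex.Gamma (β:ℂ)‖ := by
            gcongr
        _ = (C / ‖Complex.Gamma (β:ℂ)‖) / (γ^2 + y^2) := by ring
    have hint : Integrable fun y : ℝ => Complex.Gamma (((γ:ℝ):ℂ) + (y:ℂ) * Complex.I) *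
        Complex.Gamma ((β:ℂ) - (((γ:ℝ):ℂ) + (y:ℂ) * Complex.I)) / Complex.Gamma (β:ℂ) :=
      (mb_integrable_aux γ hγ0 (C / ‖Complex.Gamma (β:ℂ)‖)).mono'
        ((hcv1.mul hcv2).div_const _).aestronglyMeasurable (ae_of_all _ hbv)
    exact hint.congr (Filter.Eventually.of_forall fun y => (hmel y).symm)
  have hcontf : ContinuousAt f t := by
    have h1 : ContinuousAt (fun z : ℂ => z ^ (-(β:ℂ))) ((1 + t : ℝ) : ℂ) := by
      apply continuousAt_cpow_const
      rw [Complex.mem_slitPlane_iff]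
      left
      simp
      linarith
    have hbase : Continuous fun x : ℝ => ((1 + x : ℝ) : ℂ) := by fun_prop
    show ContinuousAt (fun x : ℝ => (((1 + x : ℝ) : ℂ)) ^ (-(β:ℂ))) t
    exact ContinuousAt.comp (f := fun x : ℝ => ((1 + x : ℝ) : ℂ)) h1 (hbase.continuousAt (x := t))
  have hinv := mellinInv_mellin_eq γ f ht hmc hvert hcontf
  -- unfold and compute
  rw [mellinInv] at hinv
  have hptw : ∀ y : ℝ, (t : ℂ) ^ (-(((γ:ℝ):ℂ) + (y:ℂ) * Complex.I)) •
      mellin f (((γ:ℝ):ℂ) + (y:ℂ) * Complex.I) = G (-y) / Complex.Gamma (β:ℂ) := by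
    intro y
    have e1 : G (-y) = Complex.Gamma ((γ:ℂ) + (y:ℂ) * Complex.I) *
        Complex.Gamma ((β:ℂ) - ((γ:ℂ) + (y:ℂ) * Complex.I)) *
        (t:ℂ) ^ (-((γ:ℂ) + (y:ℂ) * Complex.I)) := by
      simp only [hGdef]
      push_cast
      rw [show -(-(γ:ℂ) + Complex.I * -(y:ℂ)) = (γ:ℂ) + (y:ℂ) * Complex.I by ring]
      rw [show (β:ℂ) + (-(γ:ℂ) + Complex.I * -(y:ℂ)) = (β:ℂ) - ((γ:ℂ) + (y:ℂ) * Complex.I) by ring]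
      rw [show -(γ:ℂ) + Complex.I * -(y:ℂ) = -((γ:ℂ) + (y:ℂ) * Complex.I) by ring]
    rw [hmel y, smul_eq_mul, e1]
    ring
  have hint_eq : (∫ y : ℝ, (t : ℂ) ^ (-(((γ:ℝ):ℂ) + (y:ℂ) * Complex.I)) •
      mellin f (((γ:ℝ):ℂ) + (y:ℂ) * Complex.I)) = (∫ v : ℝ, G v) / Complex.Gamma (β:ℂ) := by
    rw [integral_congr_ae (Filter.Eventually.of_forall hptw)]
    rw [integral_div]
    congr 1
    exact mb_int_neg G
  rw [hint_eq] at hinv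
  have hft : ((1 + t : ℝ):ℂ) ^ (-(β:ℂ)) = f t := rfl
  rw [hft, ← hinv, Complex.real_smul]
  have hπ : (Real.pi : ℂ) ≠ 0 := by exact_mod_cast Real.pi_ne_zero
  push_cast
  field_simp
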